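/- (Estimate I₂ from the proof of Lemma 3.1(a).) Let n ≥ 1 be an integer, let 0 < m < n/2 and σ > 0 be real numbers. Then there exists a constant C > 0 such that for every x ∈ ℝⁿ with x ≠ 0: ∫_{{y : |y−x| ≥ |x|/2 and |y| ≤ |x|}} |y|^{2m−n} |x−y|^{−(n+2σ)} dy ≤ C |x|^{2m−2σ−n}. -/

import Mathlib

open MeasureTheory Real Metric Set
open scoped ENNReal NNReal

section aux

variable (n : ℕ)

local notation "E" n => EuclideanSpace ℝ (Fin n)

lemma annuli_cover {X : Type*} [NormedAddCommGroup X] {R : ℝ} (hR : 0 < R) :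
    closedBall (0 : X) R \ {0} ⊆
      ⋃ k : ℕ, closedBall (0 : X) (R * (2⁻¹ : ℝ) ^ k)
        \ closedBall (0 : X) (R * (2⁻¹ : ℝ) ^ (k + 1)) := by
  intro y hy
  obtain ⟨hyR, hy0⟩ := hy
  have hy0' : y ≠ 0 := hy0
  have hny : 0 < ‖y‖ := norm_pos_iff.2 hy0'
  have hyR' : ‖y‖ ≤ R := by simpa using hyR
  have hex : ∃ k : ℕ, R * (2⁻¹ : ℝ) ^ (k + 1) < ‖y‖ := by
    obtain ⟨k, hk⟩ := exists_pow_lt_of_lt_one (div_pos hny hR) (by norm_num : (2⁻¹ : ℝ) < 1)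
    refine ⟨k, ?_⟩
    have h1 : ((2:ℝ)⁻¹) ^ (k + 1) ≤ (2⁻¹ : ℝ) ^ k :=
      pow_le_pow_of_le_one (by norm_num) (by norm_num) (Nat.le_succ k)
    have := (mul_lt_mul_iff_right₀ hR).2 hk
    rw [mul_div_cancel₀ _ hR.ne'] at this
    nlinarith
  classical
  have hspec : R * (2⁻¹ : ℝ) ^ (Nat.find hex + 1) < ‖y‖ := Nat.find_spec hex
  have hupper : ‖y‖ ≤ R * (2⁻¹ : ℝ) ^ (Nat.find hex) := by
    rcases Nat.eq_zero_or_pos (Nat.find hex) with h0 | hpos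
    · simp only [h0, pow_zero, mul_one]; exact hyR'
    · obtain ⟨j, hj⟩ := Nat.exists_eq_succ_of_ne_zero hpos.ne'
      have hmin := Nat.find_min hex (m := j) (by omega)
      push_neg at hmin
      rw [hj]
      simpa using hmin
  refine mem_iUnion.2 ⟨Nat.find hex, ?_, ?_⟩
  · simpa using hupper
  · simp only [mem_closedBall, dist_zero_right, not_le]
    simpa using hspec

lemma ball_lintegral (hn : 1 ≤ n) {p : ℝ} (hpn : -(n : ℝ) < p) (hp0 : p ≤ 0) :
    ∃ K : ℝ≥0∞, K ≠ ⊤ ∧ ∀ R : ℝ, 0 < R →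
      (∫⁻ y in closedBall (0 : E n) R, ENNReal.ofReal (‖y‖ ^ p))
        ≤ ENNReal.ofReal (R ^ (p + n)) * K := by
  set V : ℝ≥0∞ := volume (ball (0 : E n) 1) with hV
  have hVfin : V ≠ ⊤ := measure_ball_lt_top.ne
  set r : ℝ≥0∞ := ENNReal.ofReal ((2⁻¹ : ℝ) ^ (p + n)) with hr
  have hpn' : 0 < p + n := by linarith
  have hrlt : r < 1 := by
    rw [hr, ← ENNReal.ofReal_one]
    exact ENNReal.ofReal_lt_ofReal_iff_of_nonneg (rpow_nonneg (by norm_num) _) |>.2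
      (rpow_lt_one (by norm_num) (by norm_num) hpn')
  have hsum : (1 - r)⁻¹ ≠ ⊤ := by
    rw [ENNReal.inv_ne_top]
    exact (tsub_pos_of_lt hrlt).ne'
  refine ⟨ENNReal.ofReal ((2⁻¹ : ℝ) ^ p) * V * (1 - r)⁻¹,
    by finiteness, fun R hR => ?_⟩
  -- remove origin
  have hsing : volume ({0} : Set (E n)) = 0 := by
    have h0 : ({0} : Set (E n)) ⊆ closedBall (0 : E n) 0 := by simp
    refine measure_mono_null h0 ?_
    rw [Measure.addHaar_closedBall volume (0 : E n) le_rfl]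
    rw [finrank_euclideanSpace_fin]
    rw [zero_pow (by omega : n ≠ 0)]
    simp
  have step0 : (∫⁻ y in closedBall (0 : E n) R, ENNReal.ofReal (‖y‖ ^ p))
      = ∫⁻ y in closedBall (0 : E n) R \ {0}, ENNReal.ofReal (‖y‖ ^ p) := by
    refine (setLIntegral_congr ?_).symm
    exact diff_ae_eq_self.2 (measure_mono_null inter_subset_right hsing)
  rw [step0]
  have step1 : (∫⁻ y in closedBall (0 : E n) R \ {0}, ENNReal.ofReal (‖y‖ ^ p))
      ≤ ∫⁻ y in ⋃ k : ℕ, closedBall (0 : E n) (R * (2⁻¹ : ℝ) ^ k)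
          \ closedBall (0 : E n) (R * (2⁻¹ : ℝ) ^ (k + 1)), ENNReal.ofReal (‖y‖ ^ p) :=
    lintegral_mono' (Measure.restrict_mono (annuli_cover hR) le_rfl) le_rfl
  refine step1.trans ?_
  refine (lintegral_iUnion_le _ _).trans ?_
  -- bound each annulus term
  have hterm : ∀ k : ℕ,
      (∫⁻ y in closedBall (0 : E n) (R * (2⁻¹ : ℝ) ^ k)
          \ closedBall (0 : E n) (R * (2⁻¹ : ℝ) ^ (k + 1)), ENNReal.ofReal (‖y‖ ^ p))
        ≤ ENNReal.ofReal (R ^ (p + n)) * (ENNReal.ofReal ((2⁻¹ : ℝ) ^ p) * V) * r ^ k := by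
    intro k
    have hrad : (0:ℝ) < R * (2⁻¹ : ℝ) ^ (k + 1) := by positivity
    have hbd : ∀ y ∈ closedBall (0 : E n) (R * (2⁻¹ : ℝ) ^ k)
        \ closedBall (0 : E n) (R * (2⁻¹ : ℝ) ^ (k + 1)),
        ENNReal.ofReal (‖y‖ ^ p) ≤ ENNReal.ofReal ((R * (2⁻¹ : ℝ) ^ (k + 1)) ^ p) := by
      intro y hy
      have h2 : R * (2⁻¹ : ℝ) ^ (k + 1) < ‖y‖ := by
        have := hy.2
        simp only [mem_closedBall, dist_zero_right, not_le] at this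
        exact this
      exact ENNReal.ofReal_le_ofReal (rpow_le_rpow_of_nonpos hrad h2.le hp0)
    have hmeas : MeasurableSet (closedBall (0 : E n) (R * (2⁻¹ : ℝ) ^ k)
        \ closedBall (0 : E n) (R * (2⁻¹ : ℝ) ^ (k + 1))) :=
      measurableSet_closedBall.diff measurableSet_closedBall
    calc (∫⁻ y in closedBall (0 : E n) (R * (2⁻¹ : ℝ) ^ k)
            \ closedBall (0 : E n) (R * (2⁻¹ : ℝ) ^ (k + 1)), ENNReal.ofReal (‖y‖ ^ p))
        ≤ ∫⁻ _ in closedBall (0 : E n) (R * (2⁻¹ : ℝ) ^ k)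
            \ closedBall (0 : E n) (R * (2⁻¹ : ℝ) ^ (k + 1)),
            ENNReal.ofReal ((R * (2⁻¹ : ℝ) ^ (k + 1)) ^ p) := setLIntegral_mono' hmeas hbd
      _ = ENNReal.ofReal ((R * (2⁻¹ : ℝ) ^ (k + 1)) ^ p) *
            volume (closedBall (0 : E n) (R * (2⁻¹ : ℝ) ^ k)
              \ closedBall (0 : E n) (R * (2⁻¹ : ℝ) ^ (k + 1))) := setLIntegral_const _ _
      _ ≤ ENNReal.ofReal ((R * (2⁻¹ : ℝ) ^ (k + 1)) ^ p) *
            volume (closedBall (0 : E n) (R * (2⁻¹ : ℝ) ^ k)) := by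
            gcongr; exact diff_subset
      _ = ENNReal.ofReal ((R * (2⁻¹ : ℝ) ^ (k + 1)) ^ p) *
            (ENNReal.ofReal ((R * (2⁻¹ : ℝ) ^ k) ^ n) * V) := by
            rw [Measure.addHaar_closedBall volume (0 : E n) (by positivity),
              finrank_euclideanSpace_fin]
      _ = ENNReal.ofReal (((R * (2⁻¹ : ℝ) ^ (k + 1)) ^ p) * ((R * (2⁻¹ : ℝ) ^ k) ^ n)) * V := by
            rw [ENNReal.ofReal_mul (by positivity)]; ring
      _ = ENNReal.ofReal (R ^ (p + n) * (2⁻¹ : ℝ) ^ p * ((2⁻¹ : ℝ) ^ (p + n)) ^ k) * V := by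
            congr 1
            have h2 : (0:ℝ) ≤ (2⁻¹ : ℝ) := by norm_num
            have e1 : ((2⁻¹:ℝ)^(k+1))^p = (2⁻¹:ℝ) ^ (((k:ℝ)+1)*p) := by
              rw [← rpow_natCast (2⁻¹:ℝ) (k+1), ← rpow_mul h2]
              push_cast
              ring_nf
            have e2 : ((2⁻¹:ℝ)^k)^n = (2⁻¹:ℝ) ^ ((k:ℝ)*n) := by
              rw [← rpow_natCast (2⁻¹:ℝ) k, ← rpow_natCast ((2⁻¹:ℝ) ^ (k:ℝ)) n,
                ← rpow_mul h2]
            have e3 : R^(n:ℕ) = R ^ (n:ℝ) := (rpow_natCast R n).symm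
            have e4 : ((2⁻¹:ℝ)^(p+(n:ℝ)))^k = (2⁻¹:ℝ) ^ ((p+(n:ℝ))*(k:ℝ)) := by
              rw [← rpow_natCast ((2⁻¹:ℝ) ^ (p+(n:ℝ))) k, ← rpow_mul h2]
            rw [mul_rpow hR.le (by positivity), mul_pow, e1, e2, e3, e4]
            congr 1
            calc R ^ p * (2⁻¹:ℝ) ^ (((k:ℝ)+1)*p) * (R ^ (n:ℝ) * (2⁻¹:ℝ) ^ ((k:ℝ)*n))
                = (R ^ p * R ^ (n:ℝ)) * ((2⁻¹:ℝ) ^ (((k:ℝ)+1)*p) * (2⁻¹:ℝ) ^ ((k:ℝ)*n)) := by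
                  ring
              _ = R ^ (p + (n:ℝ)) * (2⁻¹:ℝ) ^ ((((k:ℝ)+1)*p) + ((k:ℝ)*n)) := by
                  rw [← rpow_add hR, ← rpow_add (by norm_num : (0:ℝ) < 2⁻¹)]
              _ = R ^ (p + (n:ℝ)) * ((2⁻¹:ℝ) ^ p * (2⁻¹:ℝ) ^ ((p+(n:ℝ))*(k:ℝ))) := by
                  rw [← rpow_add (by norm_num : (0:ℝ) < 2⁻¹)]
                  congr 1
                  ring_nf
              _ = R ^ (p + (n:ℝ)) * (2⁻¹:ℝ) ^ p * (2⁻¹:ℝ) ^ ((p+(n:ℝ))*(k:ℝ)) := by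
                  ring
      _ = ENNReal.ofReal (R ^ (p + n)) * (ENNReal.ofReal ((2⁻¹ : ℝ) ^ p) * V) * r ^ k := by
            rw [ENNReal.ofReal_mul (by positivity), ENNReal.ofReal_mul (by positivity),
              ENNReal.ofReal_pow (by positivity)]
            ring
  calc (∑' k : ℕ, ∫⁻ y in closedBall (0 : E n) (R * (2⁻¹ : ℝ) ^ k)
          \ closedBall (0 : E n) (R * (2⁻¹ : ℝ) ^ (k + 1)), ENNReal.ofReal (‖y‖ ^ p))
      ≤ ∑' k : ℕ, ENNReal.ofReal (R ^ (p + n)) * (ENNReal.ofReal ((2⁻¹ : ℝ) ^ p) * V) * r ^ k :=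
        ENNReal.tsum_le_tsum hterm
    _ = ENNReal.ofReal (R ^ (p + n)) * (ENNReal.ofReal ((2⁻¹ : ℝ) ^ p) * V) * (1 - r)⁻¹ := by
        rw [ENNReal.tsum_mul_left, ENNReal.tsum_geometric]
    _ = ENNReal.ofReal (R ^ (p + n)) * (ENNReal.ofReal ((2⁻¹ : ℝ) ^ p) * V * (1 - r)⁻¹) := by
        ring

end aux

/-- Estimate `I₂` from the proof of Lemma 3.1(a): for `0 < m < n/2` and `σ > 0`
there is `C > 0` such that for every `x ≠ 0`,
`∫_{|y-x| ≥ |x|/2, |y| ≤ |x|} |y|^{2m-n} |x-y|^{-(n+2σ)} dy ≤ C |x|^{2m-2σ-n}`. -/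
theorem I2_estimate (n : ℕ) (hn : 1 ≤ n) (m σ : ℝ)
    (hm : 0 < m) (hmn : m < n / 2) (hσ : 0 < σ) :
    ∃ C > (0 : ℝ), ∀ x : EuclideanSpace ℝ (Fin n), x ≠ 0 →
      (∫ y in {y : EuclideanSpace ℝ (Fin n) | ‖x‖ / 2 ≤ ‖y - x‖ ∧ ‖y‖ ≤ ‖x‖},
          ‖y‖ ^ (2 * m - n) * ‖x - y‖ ^ (-((n : ℝ) + 2 * σ)))
        ≤ C * ‖x‖ ^ (2 * m - 2 * σ - n) := by
  obtain ⟨K, hKfin, hK⟩ := ball_lintegral n hn (p := 2 * m - n)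
    (by linarith) (by linarith)
  set p : ℝ := 2 * m - n with hp
  set q : ℝ := -((n : ℝ) + 2 * σ) with hq
  set e : ℝ := 2 * m - 2 * σ - n with he
  have hKt : 0 ≤ K.toReal := ENNReal.toReal_nonneg
  refine ⟨(2:ℝ) ^ ((n:ℝ) + 2*σ) * K.toReal + 1, by positivity, fun x hx => ?_⟩
  have hxn : 0 < ‖x‖ := norm_pos_iff.2 hx
  set S : Set (EuclideanSpace ℝ (Fin n)) :=
    {y | ‖x‖ / 2 ≤ ‖y - x‖ ∧ ‖y‖ ≤ ‖x‖} with hS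
  have hSm : MeasurableSet S := by
    have h1 : IsClosed {y : EuclideanSpace ℝ (Fin n) | ‖x‖ / 2 ≤ ‖y - x‖} :=
      isClosed_le continuous_const ((continuous_id.sub continuous_const).norm)
    have h2 : IsClosed {y : EuclideanSpace ℝ (Fin n) | ‖y‖ ≤ ‖x‖} :=
      isClosed_le continuous_norm continuous_const
    exact (h1.inter h2).measurableSet
  have hfm : Measurable fun y : EuclideanSpace ℝ (Fin n) => ‖y‖ ^ p * ‖x - y‖ ^ q := by
    fun_prop
  have hnonneg : 0 ≤ᶠ[ae (volume.restrict S)]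
      fun y : EuclideanSpace ℝ (Fin n) => ‖y‖ ^ p * ‖x - y‖ ^ q :=
    Filter.Eventually.of_forall fun y => by positivity
  rw [integral_eq_lintegral_of_nonneg_ae hnonneg hfm.aestronglyMeasurable]
  refine ENNReal.toReal_le_of_le_ofReal (by positivity) ?_
  have hgm : Measurable fun y : EuclideanSpace ℝ (Fin n) => ENNReal.ofReal (‖y‖ ^ p) := by
    fun_prop
  calc (∫⁻ y in S, ENNReal.ofReal (‖y‖ ^ p * ‖x - y‖ ^ q))
      ≤ ∫⁻ y in S, ENNReal.ofReal ((‖x‖/2) ^ q) * ENNReal.ofReal (‖y‖ ^ p) := by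
        refine setLIntegral_mono' hSm fun y hy => ?_
        rw [ENNReal.ofReal_mul (by positivity), mul_comm]
        refine mul_le_mul_left (ENNReal.ofReal_le_ofReal ?_) _
        have hq0 : q ≤ 0 := by
          rw [hq]
          have : (0:ℝ) ≤ (n:ℝ) := Nat.cast_nonneg n
          linarith
        refine rpow_le_rpow_of_nonpos (by positivity) ?_ hq0
        rw [norm_sub_rev]
        exact hy.1
    _ = ENNReal.ofReal ((‖x‖/2) ^ q) * ∫⁻ y in S, ENNReal.ofReal (‖y‖ ^ p) :=
        lintegral_const_mul _ hgm
    _ ≤ ENNReal.ofReal ((‖x‖/2) ^ q) *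
          ∫⁻ y in closedBall (0 : EuclideanSpace ℝ (Fin n)) ‖x‖, ENNReal.ofReal (‖y‖ ^ p) := by
        gcongr
        intro y hy
        simpa [dist_zero_right] using hy.2
    _ ≤ ENNReal.ofReal ((‖x‖/2) ^ q) * (ENNReal.ofReal (‖x‖ ^ (p + n)) * K) := by
        gcongr
        exact hK ‖x‖ hxn
    _ = ENNReal.ofReal ((‖x‖/2) ^ q * ‖x‖ ^ (p + n) * K.toReal) := by
        rw [ENNReal.ofReal_mul (show (0:ℝ) ≤ (‖x‖/2) ^ q * ‖x‖ ^ (p + n) by positivity),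
          ENNReal.ofReal_mul (show (0:ℝ) ≤ (‖x‖/2) ^ q by positivity),
          ENNReal.ofReal_toReal hKfin, mul_assoc]
    _ ≤ ENNReal.ofReal (((2:ℝ) ^ ((n:ℝ) + 2*σ) * K.toReal + 1) * ‖x‖ ^ e) := by
        refine ENNReal.ofReal_le_ofReal ?_
        have key : (‖x‖/2) ^ q * ‖x‖ ^ (p + n)
            = (2:ℝ) ^ ((n:ℝ) + 2*σ) * ‖x‖ ^ e := by
          rw [div_rpow (norm_nonneg x) (by norm_num : (0:ℝ) ≤ 2), div_mul_eq_mul_div,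
            ← rpow_add hxn]
          rw [show q + (p + n) = e by rw [hq, hp, he]; ring]
          rw [div_eq_mul_inv, ← rpow_neg (by norm_num : (0:ℝ) ≤ 2)]
          rw [show -q = (n:ℝ) + 2*σ by rw [hq]; ring]
          ring
        calc (‖x‖/2) ^ q * ‖x‖ ^ (p + n) * K.toReal
            = ((2:ℝ) ^ ((n:ℝ) + 2*σ) * K.toReal) * ‖x‖ ^ e := by rw [key]; ring
          _ ≤ ((2:ℝ) ^ ((n:ℝ) + 2*σ) * K.toReal + 1) * ‖x‖ ^ e := by
              have : (0:ℝ) ≤ ‖x‖ ^ e := by positivity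
              nlinarith
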